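/- Assume M is atomic over A and strongly ω-homogeneous over A. Let φ(x̄,ȳ) be an L-formula with parameters from A in two n-tuples of free variables and let b̄ be an n-tuple from M. Then the following are equivalent: (a) there exist an elementary extension N of M and an n-tuple ā from N such that ā satisfies the same L-formulas with parameters from A as b̄ does, and N ⊨ φ(ā, b̄); (b) there exists σ ∈ Aut(M/A) with M ⊨ φ(σ(b̄), b̄). -/
import Mathlib


open FirstOrder FirstOrder.Language

universe u v w

section Defs

variable (L : FirstOrder.Language.{u, v}) (M : Type w) [L.Structure M]

/-- `Aut(M/A)`: the group of `L`-automorphisms of `M` fixing `A` pointwise, realized as a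
subgroup of `Equiv.Perm M`. -/
def autFix (A : Set M) : Subgroup (Equiv.Perm M) where
  carrier := {σ | (∃ e : M ≃[L] M, ⇑e = ⇑σ) ∧ ∀ a ∈ A, σ a = a}
  one_mem' := ⟨⟨Language.Equiv.refl L M, funext fun x => by simp⟩, fun a _ => rfl⟩
  mul_mem' := by
    rintro σ τ ⟨⟨e, he⟩, hσ⟩ ⟨⟨f, hf⟩, hτ⟩
    refine ⟨⟨e.comp f, funext fun x => ?_⟩, fun a ha => ?_⟩
    · simp only [Language.Equiv.comp_apply, he, hf]; rfl
    · simp only [Equiv.Perm.mul_apply, hτ a ha, hσ a ha]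
  inv_mem' := by
    rintro σ ⟨⟨e, he⟩, hσ⟩
    refine ⟨⟨e.symm, funext fun x => ?_⟩, fun a ha => ?_⟩
    · have : e (σ⁻¹ x) = x := by rw [show (e : M → M) = ⇑σ from he]; simp
      simpa using congrArg e.symm this |>.symm.trans (by simp)
    · have : σ a = a := hσ a ha
      calc σ⁻¹ a = σ⁻¹ (σ a) := by rw [this]
      _ = a := by simp

variable {L M}

/-- `M` is atomic over `A`: the type over `A` of every finite tuple from `M` is isolated. -/
def AtomicOver (A : Set M) : Prop :=
  ∀ (n : ℕ) (b : Fin n → M), ∃ ψ : (L[[A]]).Formula (Fin n),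
    ψ.Realize b ∧ ∀ χ : (L[[A]]).Formula (Fin n), χ.Realize b →
      ∀ a : Fin n → M, ψ.Realize a → χ.Realize a

/-- `M` is strongly `ω`-homogeneous over `A`: any two finite tuples satisfying the same
formulas with parameters from `A` are conjugate under `Aut(M/A)`. -/
def StronglyOmegaHomOver (A : Set M) : Prop :=
  ∀ (n : ℕ) (a b : Fin n → M),
    (∀ φ : (L[[A]]).Formula (Fin n), φ.Realize a ↔ φ.Realize b) →
    ∃ σ ∈ autFix L M A, ∀ i, σ (a i) = b i

end Defs

/-- A bundled elementary extension of `M` (in the same universe as `M`). -/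
structure ElemExt (L' : FirstOrder.Language.{u, v}) (M : Type w) [L'.Structure M] where
  carrier : Type w
  [str : L'.Structure carrier]
  emb : M ↪ₑ[L'] carrier

attribute [instance] ElemExt.str


section Aux

variable {L : FirstOrder.Language.{u, v}} {M : Type w} [L.Structure M]

lemma autFix_realize {A : Set M} {σ : Equiv.Perm M} (hσ : σ ∈ autFix L M A)
    {n : ℕ} (χ : (L[[A]]).Formula (Fin n)) (v : Fin n → M) :
    χ.Realize (⇑σ ∘ v) ↔ χ.Realize v := by
  obtain ⟨⟨e, he⟩, hfix⟩ := hσ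
  have key : ∀ w : Fin n → M, χ.Realize w ↔
      (BoundedFormula.constantsVarsEquiv χ).Realize
        (Sum.elim (fun a : A => ((L.con a : M))) w) (default : Fin 0 → M) := fun w =>
    BoundedFormula.realize_constantsVarsEquiv.symm
  rw [key, key, ← he]
  have h2 : Sum.elim (fun a : A => ((L.con a : M))) (⇑e ∘ v)
      = ⇑e ∘ Sum.elim (fun a : A => ((L.con a : M))) v := by
    funext x
    rcases x with a | i
    · have hea : e (a : M) = a := by rw [congrFun he (a : M)]; exact hfix a a.2
      simp [coe_con, hea]
    · rfl
  have h3 : (default : Fin 0 → M) = ⇑e ∘ (default : Fin 0 → M) := by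
    funext x; exact x.elim0
  rw [h2]
  conv_lhs => rw [h3]
  exact StrongHomClass.realize_boundedFormula e _

/-- The formula `∃ x̄, ψ(x̄) ∧ φ(x̄, ȳ)`. -/
def theta {L' : FirstOrder.Language.{u, v}} {n : ℕ} (ψ : L'.Formula (Fin n))
    (φ : L'.Formula (Fin n ⊕ Fin n)) : L'.Formula (Fin n) :=
  (BoundedFormula.relabel (fun i : Fin n => Sum.inr i) ψ ⊓
   BoundedFormula.relabel (Sum.elim (fun i : Fin n => Sum.inr i) (fun i : Fin n => Sum.inl i)) φ).exs

lemma realize_theta {L' : FirstOrder.Language.{u, v}} {n : ℕ} {S : Type*} [L'.Structure S]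
    (ψ : L'.Formula (Fin n)) (φ : L'.Formula (Fin n ⊕ Fin n)) (v : Fin n → S) :
    (theta ψ φ).Realize v ↔ ∃ c : Fin n → S, ψ.Realize c ∧ φ.Realize (Sum.elim c v) := by
  rw [theta, BoundedFormula.realize_exs]
  refine exists_congr fun c => ?_
  rw [BoundedFormula.realize_inf, BoundedFormula.realize_relabel, BoundedFormula.realize_relabel]
  have e0 : (c ∘ Fin.natAdd n) = (default : Fin 0 → S) := funext fun i => i.elim0
  have e1 : (Sum.elim v (c ∘ Fin.castAdd 0) ∘ fun i : Fin n => Sum.inr i) = c := by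
    funext i; rfl
  have e2 : (Sum.elim v (c ∘ Fin.castAdd 0) ∘
      Sum.elim (fun i : Fin n => Sum.inr i) fun i : Fin n => Sum.inl i)
      = Sum.elim c v := by
    funext x; rcases x with i | i <;> rfl
  rw [e0, e1, e2]
  exact Iff.rfl

end Aux

variable {L : FirstOrder.Language.{u, v}} {M : Type w} [L.Structure M]

/-- For `M` atomic and strongly `ω`-homogeneous over `A`: `φ(x̄, b̄)` is realized in some
elementary extension of `M` by a tuple with the same type over `A` as `b̄` if and only if
`φ(σ(b̄), b̄)` holds for some `σ ∈ Aut(M/A)`. -/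
theorem statement4 (A : Set M) (hat : AtomicOver (L := L) A) (hhom : StronglyOmegaHomOver (L := L) A)
    (n : ℕ) (φ : (L[[A]]).Formula (Fin n ⊕ Fin n)) (b : Fin n → M) :
    (∃ (N : ElemExt (L[[A]]) M) (a : Fin n → N.carrier),
      (∀ χ : (L[[A]]).Formula (Fin n), χ.Realize a ↔ χ.Realize b) ∧
      φ.Realize (Sum.elim a (fun i => N.emb (b i)))) ↔
    (∃ σ ∈ autFix L M A, φ.Realize (Sum.elim (fun i => σ (b i)) b)) := by
  constructor
  · rintro ⟨N, a, hab, hφ⟩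
    obtain ⟨ψ, hψb, hiso⟩ := hat n b
    have hψa : ψ.Realize a := (hab ψ).mpr hψb
    have hθN : (theta ψ φ).Realize (fun i => N.emb (b i)) :=
      (realize_theta ψ φ _).mpr ⟨a, hψa, hφ⟩
    have hθM : (theta ψ φ).Realize b := by
      have := N.emb.map_formula (theta ψ φ) b
      rw [← this]; exact hθN
    obtain ⟨c, hψc, hφc⟩ := (realize_theta ψ φ b).mp hθM
    have hbc : ∀ χ : (L[[A]]).Formula (Fin n), χ.Realize b ↔ χ.Realize c := by
      intro χ
      constructor
      · intro h; exact hiso χ h c hψc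
      · intro h
        by_contra hb
        exact Formula.realize_not.mp (hiso χ.not (Formula.realize_not.mpr hb) c hψc) h
    obtain ⟨σ, hσ, hσbc⟩ := hhom n b c hbc
    refine ⟨σ, hσ, ?_⟩
    have heq : (Sum.elim (fun i => σ (b i)) b : Fin n ⊕ Fin n → M) = Sum.elim c b := by
      funext x; rcases x with i | i
      · simp [hσbc i]
      · rfl
    rw [heq]; exact hφc
  · rintro ⟨σ, hσ, hφ⟩
    refine ⟨⟨M, ElementaryEmbedding.refl (L[[A]]) M⟩, fun i => σ (b i),
      fun χ => autFix_realize hσ χ b, ?_⟩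
    exact hφ
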